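/- Let α > 0 and define the softplus loss L(δ) = 2δα⁻¹ log(1 + exp(αδ)) + 2α⁻² li₂(−exp(αδ)) + π²/(6α²), where li₂(z) = −∫₀^z log(1 − t)/t dt is Spence's dilogarithm. Then L is differentiable on ℝ with L′(δ) = 2δ · exp(αδ)/(1 + exp(αδ)) = 2δ/(1 + exp(−αδ)) for every δ ∈ ℝ. -/

import Mathlib

open Real intervalIntegral

/-- Spence's dilogarithm `li₂(z) = −∫₀^z log(1 − t)/t dt`. -/
noncomputable def li2 (z : ℝ) : ℝ := -∫ t in (0 : ℝ)..z, Real.log (1 - t) / t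

lemma li2_integrand_bound {t : ℝ} (ht : t ≤ 0) : |Real.log (1 - t) / t| ≤ 1 := by
  rcases eq_or_lt_of_le ht with h | h
  · simp [h]
  · have h1 : (0:ℝ) ≤ Real.log (1 - t) := Real.log_nonneg (by linarith)
    have h2 : Real.log (1 - t) ≤ -t := by
      have := Real.log_le_sub_one_of_pos (show (0:ℝ) < 1 - t by linarith)
      linarith
    rw [abs_le]
    constructor
    · rw [le_div_iff_of_neg h]; linarith
    · exact div_nonpos_of_nonneg_of_nonpos h1 ht |>.trans zero_le_one

lemma li2_integrable {z : ℝ} (hz : z ≤ 0) :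
    IntervalIntegrable (fun t => Real.log (1 - t) / t) MeasureTheory.volume 0 z := by
  rw [intervalIntegrable_iff]
  apply MeasureTheory.Measure.integrableOn_of_bounded (M := 1)
  · simp [Set.uIoc_of_ge hz]
  · exact (((measurable_const.sub measurable_id').log).div measurable_id').aestronglyMeasurable
  · refine (MeasureTheory.ae_restrict_iff' measurableSet_uIoc).2 (Filter.Eventually.of_forall ?_)
    intro t ht
    rw [Set.uIoc_of_ge hz] at ht
    exact li2_integrand_bound ht.2

lemma li2_hasDerivAt {z : ℝ} (hz : z < 0) :
    HasDerivAt li2 (-(Real.log (1 - z) / z)) z := by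
  have h := (intervalIntegral.integral_hasDerivAt_right (li2_integrable hz.le)
    ((((measurable_const.sub measurable_id').log).div
      measurable_id').stronglyMeasurable.stronglyMeasurableAtFilter)
    (ContinuousAt.div (Real.continuousAt_log (by linarith) |>.comp
      (continuous_const.sub continuous_id).continuousAt) continuousAt_id hz.ne)).neg
  exact h

theorem softplus_loss_deriv {α : ℝ} (hα : 0 < α)
    (L : ℝ → ℝ)
    (hL : L = fun δ => 2 * δ * α⁻¹ * Real.log (1 + Real.exp (α * δ)) +
      2 * α⁻¹ ^ 2 * li2 (-Real.exp (α * δ)) + π ^ 2 / (6 * α ^ 2)) :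
    ∀ δ : ℝ,
      HasDerivAt L (2 * δ * Real.exp (α * δ) / (1 + Real.exp (α * δ))) δ ∧
      2 * δ * Real.exp (α * δ) / (1 + Real.exp (α * δ)) =
        2 * δ / (1 + Real.exp (-α * δ)) := by
  intro δ
  have hepos : 0 < Real.exp (α * δ) := Real.exp_pos _
  have hden : (0:ℝ) < 1 + Real.exp (α * δ) := by linarith
  constructor
  · subst hL
    -- inner function
    have hinner : HasDerivAt (fun δ : ℝ => -Real.exp (α * δ)) (-(α * Real.exp (α * δ))) δ := by
      have := ((hasDerivAt_id δ).const_mul α).exp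
      have h2 : HasDerivAt (fun x : ℝ => Real.exp (α * x)) (α * Real.exp (α * δ)) δ := by
        simpa [mul_comm] using this
      exact h2.neg
    have hli2 : HasDerivAt (fun δ : ℝ => li2 (-Real.exp (α * δ)))
        (-(Real.log (1 - -Real.exp (α * δ)) / -Real.exp (α * δ)) * -(α * Real.exp (α * δ))) δ :=
      by have := (li2_hasDerivAt (neg_neg_iff_pos.2 hepos)).comp δ hinner; exact this
    have hlog : HasDerivAt (fun δ : ℝ => Real.log (1 + Real.exp (α * δ)))
        (α * Real.exp (α * δ) / (1 + Real.exp (α * δ))) δ := by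
      have h1 : HasDerivAt (fun δ : ℝ => 1 + Real.exp (α * δ)) (α * Real.exp (α * δ)) δ := by
        have := ((hasDerivAt_id δ).const_mul α).exp
        simpa [mul_comm] using this.const_add 1
      exact h1.log hden.ne'
    have hfirst : HasDerivAt (fun δ : ℝ => 2 * δ * α⁻¹ * Real.log (1 + Real.exp (α * δ)))
        (2 * α⁻¹ * Real.log (1 + Real.exp (α * δ)) +
          2 * δ * α⁻¹ * (α * Real.exp (α * δ) / (1 + Real.exp (α * δ)))) δ := by
      have hc : HasDerivAt (fun δ : ℝ => 2 * δ * α⁻¹) (2 * α⁻¹) δ := by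
        have := (hasDerivAt_id δ).const_mul 2
        simpa [mul_comm, mul_assoc] using this.mul_const α⁻¹
      exact hc.mul hlog
    have := (hfirst.add ((hli2.const_mul (2 * α⁻¹ ^ 2)))).add_const (π ^ 2 / (6 * α ^ 2))
    refine this.congr_deriv ?_
    have hlogeq : Real.log (1 - -Real.exp (α * δ)) = Real.log (1 + Real.exp (α * δ)) := by
      ring_nf
    rw [hlogeq]
    field_simp
    ring
  · rw [div_eq_div_iff hden.ne' (by positivity)]
    rw [neg_mul, Real.exp_neg]
    field_simp
    ring
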